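/- Let λ : ℝ → ℝ be a differentiable function with λ(k) > 0 for all k, and suppose that −λ'(k) ≤ 2 √(λ(k)) for all k ≤ 0. Then for every k ≤ 0 one has λ(k) ≤ (√(λ(0)) − k)². -/

import Mathlib

open Filter Set

/-- if λ > 0 is differentiable with `-λ'(k) ≤ 2√(λ(k))` for k ≤ 0, then
`λ(k) ≤ (√(λ(0)) - k)²` for every k ≤ 0. -/
theorem band_function_growth_bound (lam lam' : ℝ → ℝ)
    (hderiv : ∀ k, HasDerivAt lam (lam' k) k)
    (hpos : ∀ k, 0 < lam k)
    (hineq : ∀ k ≤ (0:ℝ), -lam' k ≤ 2 * Real.sqrt (lam k)) :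
    ∀ k ≤ (0:ℝ), lam k ≤ (Real.sqrt (lam 0) - k) ^ 2 := by
  intro k hk
  set h : ℝ → ℝ := fun x => Real.sqrt (lam x) + x with hh
  have hsq : ∀ x, 0 < Real.sqrt (lam x) := fun x => Real.sqrt_pos.2 (hpos x)
  have hderivh : ∀ x, HasDerivAt h (lam' x / (2 * Real.sqrt (lam x)) + 1) x := by
    intro x
    have h1 : HasDerivAt (fun y => Real.sqrt (lam y))
        (lam' x / (2 * Real.sqrt (lam x))) x := by
      have := (Real.hasDerivAt_sqrt (ne_of_gt (hpos x))).comp x (hderiv x)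
      simpa [Function.comp_def, div_eq_mul_inv, mul_comm, mul_left_comm, mul_assoc] using this
    exact h1.add (hasDerivAt_id x)
  have hmono : MonotoneOn h (Iic (0:ℝ)) := by
    apply monotoneOn_of_deriv_nonneg (convex_Iic 0)
    · exact Continuous.continuousOn (by
        have : Continuous fun x => Real.sqrt (lam x) :=
          Real.continuous_sqrt.comp (continuous_iff_continuousAt.2 fun x => (hderiv x).continuousAt)
        exact this.add continuous_id)
    · exact fun x _ => ((hderivh x).differentiableAt).differentiableWithinAt
    · intro x hx
      rw [interior_Iic] at hx
      rw [(hderivh x).deriv]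
      have hle : -lam' x ≤ 2 * Real.sqrt (lam x) := hineq x (le_of_lt hx)
      have h2 : 0 < 2 * Real.sqrt (lam x) := by have := hsq x; linarith
      have : -1 ≤ lam' x / (2 * Real.sqrt (lam x)) := by
        rw [le_div_iff₀ h2]; linarith
      linarith
  have hkey : h k ≤ h 0 := hmono hk (mem_Iic.2 le_rfl) hk
  have hg : Real.sqrt (lam k) ≤ Real.sqrt (lam 0) - k := by
    simp only [hh] at hkey; linarith
  calc lam k = Real.sqrt (lam k) ^ 2 := (Real.sq_sqrt (hpos k).le).symm
    _ ≤ (Real.sqrt (lam 0) - k) ^ 2 :=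
        pow_le_pow_left₀ (hsq k).le hg 2
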